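/- Let G=(V,W,E) be a label cover instance with m edges and ℓ:V∪W→L a label assignment satisfying every edge. Under the pricing that sets p(e_{i,κ,λ})=2 when κ=ℓ(v_i) and λ=ℓ(w_i), and p(e_{i,κ,λ})=+∞ otherwise, every directed s-t path in the constructed StackSP instance that uses a shortcut edge contains a pricable edge of price +∞, i.e., no s-t path of finite cost uses a shortcut edge. -/

import Mathlib

open scoped ENNReal

/-! ## Label cover instances -/

/-- A label cover instance: a bipartite graph `(V, W, E)` with edge list
`(ve i, we i)` for `i : Fin m`, a label set `Fin k`, and for every edge `i` a
nonempty set `R i` of satisfying label pairs. -/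
structure LabelCover where
  V : Type
  W : Type
  m : ℕ
  k : ℕ
  ve : Fin m → V
  we : Fin m → W
  R : Fin m → Finset (Fin k × Fin k)
  R_nonempty : ∀ i, (R i).Nonempty

namespace LabelCover

/-- The label assignment `(ℓv, ℓw)` satisfies edge `i`. -/
def Sat (I : LabelCover) (ℓv : I.V → Fin I.k) (ℓw : I.W → Fin I.k) (i : Fin I.m) : Prop :=
  (ℓv (I.ve i), ℓw (I.we i)) ∈ I.R i

instance (I : LabelCover) (ℓv : I.V → Fin I.k) (ℓw : I.W → Fin I.k) :
    DecidablePred (I.Sat ℓv ℓw) := fun i =>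
  decidable_of_iff ((ℓv (I.ve i), ℓw (I.we i)) ∈ I.R i) Iff.rfl

/-- The number of edges satisfied by the assignment `(ℓv, ℓw)`. -/
def satCount (I : LabelCover) (ℓv : I.V → Fin I.k) (ℓw : I.W → Fin I.k) : ℕ :=
  (Finset.univ.filter (I.Sat ℓv ℓw)).card

/-- The label pairs `a` on edge `i` and `b` on edge `j` are conflicting. -/
def Conflict (I : LabelCover) (i j : Fin I.m) (a b : Fin I.k × Fin I.k) : Prop :=
  (I.ve i = I.ve j ∧ a.1 ≠ b.1) ∨ (I.we i = I.we j ∧ a.2 ≠ b.2)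

/-! ## The StackSP instance produced by the reduction -/

/-- The nodes of the StackSP instance: the gadget boundary nodes `bd i`
(`bd i.castSucc` is the left endpoint of gadget `i`, `bd i.succ` its right
endpoint; `bd 0 = s`, `bd (last m) = t`), and for every gadget `i` and label
pair `a` the tail `tl i a` and head `hd i a` of the pricable edge `e_{i,a}`. -/
inductive Node (m k : ℕ) where
  | bd (i : Fin (m + 1))
  | tl (i : Fin m) (a : Fin k × Fin k)
  | hd (i : Fin m) (a : Fin k × Fin k)
  deriving DecidableEq

/-- The edges of the StackSP instance: for every gadget `i` and label pair `a`,
the (fixed-cost 0) edge `enter i a` from the left endpoint of gadget `i` to the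
tail of the pricable edge `price i a`, the pricable edge itself, and the
(fixed-cost 0) edge `exit i a` from its head to the right endpoint of gadget `i`;
the parallel fixed-cost-2 edge `skip i` of gadget `i`; and the shortcut edge
`shortcut i j a b` of fixed cost `j - i - 1` from the head of `price i a` to
the tail of `price j b`. -/
inductive Edge (m k : ℕ) where
  | enter (i : Fin m) (a : Fin k × Fin k)
  | price (i : Fin m) (a : Fin k × Fin k)
  | exit (i : Fin m) (a : Fin k × Fin k)
  | skip (i : Fin m)
  | shortcut (i j : Fin m) (a b : Fin k × Fin k)
  deriving DecidableEq

namespace Edge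

/-- Source node of an edge (all edges are directed from left to right). -/
def src {m k : ℕ} : Edge m k → Node m k
  | enter i _ => .bd i.castSucc
  | price i a => .tl i a
  | exit i a => .hd i a
  | skip i => .bd i.castSucc
  | shortcut i _ a _ => .hd i a

/-- Destination node of an edge. -/
def dst {m k : ℕ} : Edge m k → Node m k
  | enter i a => .tl i a
  | price i a => .hd i a
  | exit i _ => .bd i.succ
  | skip i => .bd i.succ
  | shortcut _ j _ b => .tl j b

/-- The pricable edges. -/
def IsPricable {m k : ℕ} : Edge m k → Prop
  | price _ _ => True
  | _ => False

/-- The fixed cost of an edge: `2` for the parallel fixed edge of a gadget,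
`j - i - 1` for a shortcut from gadget `i` to gadget `j`, `0` otherwise
(pricable edges have fixed cost `0`). -/
noncomputable def fixedCost {m k : ℕ} : Edge m k → ℝ≥0∞
  | skip _ => 2
  | shortcut i j _ _ => (((j : ℕ) - (i : ℕ) - 1 : ℕ) : ℝ≥0∞)
  | _ => 0

/-- Whether an edge is a pricable edge of gadget `g` (as a `Bool`). -/
def isPricableOf {m k : ℕ} (g : Fin m) : Edge m k → Bool
  | price i _ => i == g
  | _ => false

end Edge

/-- The edges actually present in the StackSP instance built from `I`:
gadget `i` has edges only for the label pairs in `R i`, and a shortcut from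
gadget `i` to gadget `j` exists precisely when `i < j` and the corresponding
label pairs are conflicting. -/
def EdgeOK (I : LabelCover) : Edge I.m I.k → Prop
  | .enter i a => a ∈ I.R i
  | .price i a => a ∈ I.R i
  | .exit i a => a ∈ I.R i
  | .skip _ => True
  | .shortcut i j a b =>
      (i : ℕ) < (j : ℕ) ∧ a ∈ I.R i ∧ b ∈ I.R j ∧ I.Conflict i j a b

/-- A pricing assigns a nonnegative (possibly infinite) price to every
pricable edge `e_{i,a}`. -/
abbrev Pricing (I : LabelCover) := Fin I.m → Fin I.k × Fin I.k → ℝ≥0∞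

/-- The price contributed by an edge (the price of a pricable edge, `0` for a
fixed-cost edge). -/
noncomputable def priceOf (I : LabelCover) (p : Pricing I) : Edge I.m I.k → ℝ≥0∞
  | .price i a => p i a
  | _ => 0

/-- The total cost of an edge: fixed cost plus price. -/
noncomputable def edgeCost (I : LabelCover) (p : Pricing I) (e : Edge I.m I.k) : ℝ≥0∞ :=
  e.fixedCost + I.priceOf p e

/-- Directed walks in the StackSP instance of `I`, recorded as lists of
consecutive valid edges. -/
inductive Walk (I : LabelCover) : Node I.m I.k → Node I.m I.k → List (Edge I.m I.k) → Prop
  | nil (u : Node I.m I.k) : Walk I u u []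
  | cons {e : Edge I.m I.k} {v : Node I.m I.k} {es : List (Edge I.m I.k)} :
      I.EdgeOK e → Walk I e.dst v es → Walk I e.src v (e :: es)

/-- The source `s` of the instance: the left endpoint of gadget `1`. -/
def source (I : LabelCover) : Node I.m I.k := .bd 0

/-- The sink `t` of the instance: the right endpoint of gadget `m`. -/
def target (I : LabelCover) : Node I.m I.k := .bd (Fin.last I.m)

/-- Total cost (fixed costs plus prices) of a list of edges. -/
noncomputable def cost (I : LabelCover) (p : Pricing I) (es : List (Edge I.m I.k)) : ℝ≥0∞ :=
  (es.map (I.edgeCost p)).sum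

/-- Revenue of a list of edges: the sum of the prices of its pricable edges. -/
noncomputable def revenue (I : LabelCover) (p : Pricing I) (es : List (Edge I.m I.k)) : ℝ≥0∞ :=
  (es.map (I.priceOf p)).sum

/-- Total fixed cost of a list of edges. -/
noncomputable def fixedSum (I : LabelCover) (es : List (Edge I.m I.k)) : ℝ≥0∞ :=
  (es.map Edge.fixedCost).sum

/-- `P` is a minimum-cost directed `s`-`t` path under pricing `p`. -/
def IsOptPath (I : LabelCover) (p : Pricing I) (P : List (Edge I.m I.k)) : Prop :=
  Walk I I.source I.target P ∧
    ∀ Q, Walk I I.source I.target Q → I.cost p P ≤ I.cost p Q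

/-- `P` is the path purchased by the consumer: a minimum-cost `s`-`t` path
which, among minimum-cost paths, maximizes the revenue. -/
def IsPurchased (I : LabelCover) (p : Pricing I) (P : List (Edge I.m I.k)) : Prop :=
  I.IsOptPath p P ∧ ∀ Q, I.IsOptPath p Q → I.revenue p Q ≤ I.revenue p P

/-! ## P-edges, significant gadgets and islands -/

/-- Gadget `g` has a P-edge, i.e. `P` uses a pricable edge of gadget `g`. -/
def HasPEdge (I : LabelCover) (P : List (Edge I.m I.k)) (g : Fin I.m) : Prop :=
  ∃ a, Edge.price g a ∈ P

/-- Gadget `g'` has a P-edge that is joined to the P-edge `e_{g,a}` of gadget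
`g` by a shortcut edge (in particular `g < g'`). -/
def Linked (I : LabelCover) (P : List (Edge I.m I.k)) (g : Fin I.m)
    (a : Fin I.k × Fin I.k) (g' : Fin I.m) : Prop :=
  ∃ b, Edge.price g' b ∈ P ∧ I.EdgeOK (.shortcut g g' a b)

/-- Every pricable edge not on `P` has price `+∞` (the w.l.o.g. normalization). -/
def OffPathInfty (I : LabelCover) (p : Pricing I) (P : List (Edge I.m I.k)) : Prop :=
  ∀ g a, Edge.price g a ∉ P → p g a = ⊤

/-- The length `in_g` of the shortcut edge used by `P` to enter gadget `g`
(`0` if no shortcut is used). -/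
noncomputable def inLen (I : LabelCover) (P : List (Edge I.m I.k)) (g : Fin I.m) : ℕ :=
  if h : ∃ g' : Fin I.m, ∃ a b, Edge.shortcut g' g a b ∈ P then
    (g : ℕ) - (h.choose : ℕ) - 1
  else 0

/-- The length `out_g` of the shortcut edge used by `P` to exit gadget `g`
(`0` if no shortcut is used). -/
noncomputable def outLen (I : LabelCover) (P : List (Edge I.m I.k)) (g : Fin I.m) : ℕ :=
  if h : ∃ g' : Fin I.m, ∃ a b, Edge.shortcut g g' a b ∈ P then
    (h.choose : ℕ) - (g : ℕ) - 1
  else 0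

/-- `P` splits as `P1 ++ M ++ P2` where `P1` goes from `s` to `u`, `M` from `u`
to `v` and `P2` from `v` to `t`. -/
def SplitsAt (I : LabelCover) (P P1 M P2 : List (Edge I.m I.k))
    (u v : Node I.m I.k) : Prop :=
  P = P1 ++ M ++ P2 ∧ Walk I I.source u P1 ∧ Walk I u v M ∧ Walk I v I.target P2

/-- The sequence `σ 0 < σ 1 < … < σ (r-1)` of significant gadgets of the
purchased path `P`, together with the labels of their P-edges:
`σ 0` is the first gadget with a P-edge; given `σ i`, if some gadget beyond
`σ i` has a P-edge joined to the P-edge of `σ i` by a shortcut edge then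
`σ (i+1)` is the largest such gadget, and otherwise `σ i` is an end point and
`σ (i+1)` is the next gadget after `σ i` having a P-edge; the process stops at
`σ (r-1)`, which is an end point, with no P-edge beyond it. -/
structure SigSeq (I : LabelCover) (P : List (Edge I.m I.k)) where
  r : ℕ
  rpos : 0 < r
  σ : Fin r → Fin I.m
  lab : Fin r → Fin I.k × Fin I.k
  mono : StrictMono σ
  mem : ∀ i, Edge.price (σ i) (lab i) ∈ P
  first : ∀ g, I.HasPEdge P g → σ ⟨0, rpos⟩ ≤ g
  step : ∀ i : ℕ, ∀ h : i + 1 < r,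
    (I.Linked P (σ ⟨i, Nat.lt_of_succ_lt h⟩) (lab ⟨i, Nat.lt_of_succ_lt h⟩) (σ ⟨i + 1, h⟩) ∧
      ∀ g, I.Linked P (σ ⟨i, Nat.lt_of_succ_lt h⟩) (lab ⟨i, Nat.lt_of_succ_lt h⟩) g →
        g ≤ σ ⟨i + 1, h⟩) ∨
    ((¬ ∃ g, I.Linked P (σ ⟨i, Nat.lt_of_succ_lt h⟩) (lab ⟨i, Nat.lt_of_succ_lt h⟩) g) ∧
      I.HasPEdge P (σ ⟨i + 1, h⟩) ∧
      ∀ g, σ ⟨i, Nat.lt_of_succ_lt h⟩ < g → I.HasPEdge P g → σ ⟨i + 1, h⟩ ≤ g)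
  last : ¬ ∃ g, I.Linked P (σ ⟨r - 1, by omega⟩) (lab ⟨r - 1, by omega⟩) g
  cover : ∀ g, I.HasPEdge P g → g ≤ σ ⟨r - 1, by omega⟩

/-- Significant gadget `σ i` is an end point: no gadget has a P-edge joined to
the P-edge of `σ i` by a shortcut edge. -/
def SigSeq.IsEnd {I : LabelCover} {P : List (Edge I.m I.k)} (S : I.SigSeq P)
    (i : Fin S.r) : Prop :=
  ¬ ∃ g, I.Linked P (S.σ i) (S.lab i) g

/-- Significant gadget `σ i` is a start point: it is the first significant
gadget, or its predecessor is an end point. -/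
def SigSeq.IsStart {I : LabelCover} {P : List (Edge I.m I.k)} (S : I.SigSeq P)
    (i : Fin S.r) : Prop :=
  (i : ℕ) = 0 ∨ (0 < (i : ℕ) ∧ ∃ h : (i : ℕ) - 1 < S.r, S.IsEnd ⟨(i : ℕ) - 1, h⟩)

/-- `σ α, …, σ ω` is an island: `α` is a start point, `ω` is the next end
point after `α`. -/
def SigSeq.IsIsland {I : LabelCover} {P : List (Edge I.m I.k)} (S : I.SigSeq P)
    (α ω : Fin S.r) : Prop :=
  α ≤ ω ∧ S.IsStart α ∧ S.IsEnd ω ∧ ∀ i : Fin S.r, α ≤ i → i < ω → ¬ S.IsEnd i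

end LabelCover

open LabelCover

/-- Under the pricing induced by a label assignment satisfying
every edge, every directed `s`-`t` path using a shortcut edge contains a
pricable edge of price `+∞`; in particular no `s`-`t` path of finite cost uses
a shortcut edge. -/

private lemma walk_edgeOK {I : LabelCover} {u v : Node I.m I.k} {es : List (Edge I.m I.k)}
    (w : Walk I u v es) {e : Edge I.m I.k} (he : e ∈ es) : I.EdgeOK e := by
  induction w with
  | nil => cases he
  | cons h w ih =>
    rcases List.mem_cons.1 he with rfl | h'
    · exact h
    · exact ih h'

private lemma walk_pred {I : LabelCover} {u v : Node I.m I.k} {es : List (Edge I.m I.k)}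
    (w : Walk I u v es) {e : Edge I.m I.k} (he : e ∈ es) :
    e.src = u ∨ ∃ e' ∈ es, Edge.dst e' = e.src := by
  induction w with
  | nil => cases he
  | cons h w ih =>
    rcases List.mem_cons.1 he with rfl | h'
    · exact Or.inl rfl
    · rcases ih h' with h2 | ⟨e', he', hd⟩
      · exact Or.inr ⟨_, List.mem_cons_self, h2.symm⟩
      · exact Or.inr ⟨e', List.mem_cons_of_mem _ he', hd⟩

private lemma walk_nil_eq {I : LabelCover} {u v : Node I.m I.k}
    (w : Walk I u v []) : u = v := by cases w; rfl

private lemma walk_cons_src {I : LabelCover} {u v : Node I.m I.k} {e : Edge I.m I.k}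
    {es : List (Edge I.m I.k)} (w : Walk I u v (e :: es)) : u = e.src := by
  cases w; rfl

private lemma walk_succ {I : LabelCover} {u v : Node I.m I.k} {es : List (Edge I.m I.k)}
    (w : Walk I u v es) {e : Edge I.m I.k} (he : e ∈ es) :
    e.dst = v ∨ ∃ e' ∈ es, Edge.src e' = e.dst := by
  induction w with
  | nil => cases he
  | cons h w ih =>
    rename_i e0 v0 es0
    rcases List.mem_cons.1 he with rfl | h'
    · cases es0 with
      | nil => exact Or.inl (walk_nil_eq w)
      | cons e1 es1 =>
        exact Or.inr ⟨e1, List.mem_cons_of_mem _ (List.mem_cons_self),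
          (walk_cons_src w).symm⟩
    · rcases ih h' with h2 | ⟨e', he', hd⟩
      · exact Or.inl h2
      · exact Or.inr ⟨e', List.mem_cons_of_mem _ he', hd⟩

theorem stackSP_shortcut_path_infinite (I : LabelCover)
    (ℓv : I.V → Fin I.k) (ℓw : I.W → Fin I.k)
    (hsat : ∀ i, I.Sat ℓv ℓw i)
    (p : Pricing I)
    (hp : ∀ (i : Fin I.m) (a : Fin I.k × Fin I.k),
      p i a = if a = (ℓv (I.ve i), ℓw (I.we i)) then 2 else ⊤) :
    ∀ P : List (Edge I.m I.k), Walk I I.source I.target P →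
      (∃ (g g' : Fin I.m) (a b : Fin I.k × Fin I.k), Edge.shortcut g g' a b ∈ P) →
      (∃ (g : Fin I.m) (a : Fin I.k × Fin I.k), Edge.price g a ∈ P ∧ p g a = ⊤) ∧
      I.cost p P = ⊤ := by
  intro P w ⟨g, g', a, b, hsc⟩
  have ok := walk_edgeOK w hsc
  obtain ⟨hlt, ha, hb, hconf⟩ := ok
  -- the predecessor of the shortcut is the pricable edge of gadget g
  have hpa : Edge.price g a ∈ P := by
    rcases walk_pred w hsc with h | ⟨e', he', hd⟩
    · simp [Edge.src, LabelCover.source] at h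
    · cases e' with
      | price i c =>
        simp only [Edge.dst, Edge.src, Node.hd.injEq] at hd
        obtain ⟨rfl, rfl⟩ := hd
        exact he'
      | enter i c => simp [Edge.dst, Edge.src] at hd
      | exit i c => simp [Edge.dst, Edge.src] at hd
      | skip i => simp [Edge.dst, Edge.src] at hd
      | shortcut i j c d => simp [Edge.dst, Edge.src] at hd
  -- the successor of the shortcut is the pricable edge of gadget g'
  have hpb : Edge.price g' b ∈ P := by
    rcases walk_succ w hsc with h | ⟨e', he', hd⟩
    · simp [Edge.dst, LabelCover.target] at h
    · cases e' with
      | price i c =>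
        simp only [Edge.dst, Edge.src, Node.tl.injEq] at hd
        obtain ⟨rfl, rfl⟩ := hd
        exact he'
      | enter i c => simp [Edge.dst, Edge.src] at hd
      | exit i c => simp [Edge.dst, Edge.src] at hd
      | skip i => simp [Edge.dst, Edge.src] at hd
      | shortcut i j c d => simp [Edge.dst, Edge.src] at hd
  have key : p g a = ⊤ ∨ p g' b = ⊤ := by
    rw [hp, hp]
    by_cases h1 : a = (ℓv (I.ve g), ℓw (I.we g))
    · by_cases h2 : b = (ℓv (I.ve g'), ℓw (I.we g'))
      · exfalso
        rcases hconf with ⟨hv, hne⟩ | ⟨hw, hne⟩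
        · exact hne (by rw [h1, h2]; simp [hv])
        · exact hne (by rw [h1, h2]; simp [hw])
      · right; simp [h2]
    · left; simp [h1]
  have costtop : ∀ (g0 : Fin I.m) (a0 : Fin I.k × Fin I.k),
      Edge.price g0 a0 ∈ P → p g0 a0 = ⊤ → I.cost p P = ⊤ := by
    intro g0 a0 hmem htop
    have hmem' : (⊤ : ℝ≥0∞) ∈ P.map (I.edgeCost p) := by
      refine List.mem_map.2 ⟨_, hmem, ?_⟩
      simp [LabelCover.edgeCost, LabelCover.priceOf, htop]
    have hle := List.single_le_sum (l := P.map (I.edgeCost p))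
      (fun x _ => zero_le) _ hmem'
    exact top_le_iff.1 hle
  rcases key with h | h
  · exact ⟨⟨g, a, hpa, h⟩, costtop g a hpa h⟩
  · exact ⟨⟨g', b, hpb, h⟩, costtop g' b hpb h⟩
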